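/- For the 3-agent matching instance with valuations v_1 = (1/3, 2/3, 0), v_2 = (0, 2/3, 1/3), v_3 = (1/3, 1/3, 1/3) over items (a,b,c), the unique iEF lottery is the one assigning probability 1/3 to each of the matchings (a,b,c), (a,c,b), and (b,c,a), and this lottery is not ex-post Pareto-efficient since (a,c,b) is Pareto-dominated by (a,b,c). -/

import Mathlib

open Finset

/-- Probability that agent `i` receives item `j` under a lottery `x` over matchings. -/
def prMatch {n : ℕ} (x : Equiv.Perm (Fin n) → ℝ) (i j : Fin n) : ℝ :=
  ∑ b ∈ Finset.univ.filter (fun b : Equiv.Perm (Fin n) => b i = j), x b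

/-- Interim envy-freeness of a lottery over matchings: for all agents `i ≠ k` and every
item `j` received by `i` with positive probability, `v_i(j) ≥ E[v_i(b(k)) | b(i) = j]`
(stated multiplied through by the positive probability `Pr[b(i) = j]`). -/
def MIEF {n : ℕ} (v : Fin n → Fin n → ℝ) (x : Equiv.Perm (Fin n) → ℝ) : Prop :=
  ∀ i k : Fin n, i ≠ k → ∀ j : Fin n, 0 < prMatch x i j →
    (∑ b ∈ Finset.univ.filter (fun b : Equiv.Perm (Fin n) => b i = j), x b * v i (b k))
      ≤ v i j * prMatch x i j
/-- Valuations of the instance: items (a,b,c) = (0,1,2). -/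
noncomputable def v9 : Fin 3 → Fin 3 → ℝ :=
  ![![1/3, 2/3, 0], ![0, 2/3, 1/3], ![1/3, 1/3, 1/3]]

/-- The lottery assigning probability 1/3 to each of the matchings (a,b,c) = id,
(a,c,b) = swap 1 2, and (b,c,a) = finRotate 3. -/
noncomputable def lot9 : Equiv.Perm (Fin 3) → ℝ := fun b =>
  if b = Equiv.refl (Fin 3) ∨ b = Equiv.swap 1 2 ∨ b = finRotate 3 then 1/3 else 0


open Equiv in
lemma sum_perm3 (f : Equiv.Perm (Fin 3) → ℝ) :
    ∑ b, f b = f 1 + f (Equiv.swap 0 1) + f (Equiv.swap 0 2) + f (Equiv.swap 1 2)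
      + f (finRotate 3) + f (finRotate 3 * finRotate 3) := by
  rw [show (univ : Finset (Perm (Fin 3))) = {1, Equiv.swap 0 1, Equiv.swap 0 2, Equiv.swap 1 2, finRotate 3, finRotate 3 * finRotate 3} from by decide,
    Finset.sum_insert (by decide), Finset.sum_insert (by decide), Finset.sum_insert (by decide),
    Finset.sum_insert (by decide), Finset.sum_insert (by decide), Finset.sum_singleton]
  ring

lemma filter_sum3 (p : Equiv.Perm (Fin 3) → Prop) [DecidablePred p] (f : Equiv.Perm (Fin 3) → ℝ) :
    ∑ b ∈ Finset.univ.filter p, f b =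
      (if p 1 then f 1 else 0) + (if p (Equiv.swap 0 1) then f (Equiv.swap 0 1) else 0)
      + (if p (Equiv.swap 0 2) then f (Equiv.swap 0 2) else 0)
      + (if p (Equiv.swap 1 2) then f (Equiv.swap 1 2) else 0)
      + (if p (finRotate 3) then f (finRotate 3) else 0)
      + (if p (finRotate 3 * finRotate 3) then f (finRotate 3 * finRotate 3) else 0) := by
  rw [Finset.sum_filter, sum_perm3]

lemma fm2 : (⟨2, by norm_num⟩ : Fin 3) = 2 := rfl

lemma perm3_cases (b : Equiv.Perm (Fin 3)) : b = 1 ∨ b = Equiv.swap 0 1 ∨ b = Equiv.swap 0 2 ∨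
    b = Equiv.swap 1 2 ∨ b = finRotate 3 ∨ b = finRotate 3 * finRotate 3 := by
  revert b; decide

lemma ap_id1_0 : (1 : Equiv.Perm (Fin 3)) (0 : Fin 3) = 0 := by decide
lemma ap_id1_1 : (1 : Equiv.Perm (Fin 3)) (1 : Fin 3) = 1 := by decide
lemma ap_id1_2 : (1 : Equiv.Perm (Fin 3)) (2 : Fin 3) = 2 := by decide
lemma ap_s01_0 : (Equiv.swap 0 1 : Equiv.Perm (Fin 3)) (0 : Fin 3) = 1 := by decide
lemma ap_s01_1 : (Equiv.swap 0 1 : Equiv.Perm (Fin 3)) (1 : Fin 3) = 0 := by decide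
lemma ap_s01_2 : (Equiv.swap 0 1 : Equiv.Perm (Fin 3)) (2 : Fin 3) = 2 := by decide
lemma ap_s02_0 : (Equiv.swap 0 2 : Equiv.Perm (Fin 3)) (0 : Fin 3) = 2 := by decide
lemma ap_s02_1 : (Equiv.swap 0 2 : Equiv.Perm (Fin 3)) (1 : Fin 3) = 1 := by decide
lemma ap_s02_2 : (Equiv.swap 0 2 : Equiv.Perm (Fin 3)) (2 : Fin 3) = 0 := by decide
lemma ap_s12_0 : (Equiv.swap 1 2 : Equiv.Perm (Fin 3)) (0 : Fin 3) = 0 := by decide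
lemma ap_s12_1 : (Equiv.swap 1 2 : Equiv.Perm (Fin 3)) (1 : Fin 3) = 2 := by decide
lemma ap_s12_2 : (Equiv.swap 1 2 : Equiv.Perm (Fin 3)) (2 : Fin 3) = 1 := by decide
lemma ap_rot_0 : (finRotate 3) (0 : Fin 3) = 1 := by decide
lemma ap_rot_1 : (finRotate 3) (1 : Fin 3) = 2 := by decide
lemma ap_rot_2 : (finRotate 3) (2 : Fin 3) = 0 := by decide
lemma ap_rot2_0 : (finRotate 3 * finRotate 3) (0 : Fin 3) = 2 := by decide
lemma ap_rot2_1 : (finRotate 3 * finRotate 3) (1 : Fin 3) = 0 := by decide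
lemma ap_rot2_2 : (finRotate 3 * finRotate 3) (2 : Fin 3) = 1 := by decide


lemma v9_vals : v9 0 0 = 1/3 ∧ v9 0 1 = 2/3 ∧ v9 0 2 = 0 ∧ v9 1 0 = 0 ∧ v9 1 1 = 2/3 ∧
    v9 1 2 = 1/3 ∧ v9 2 0 = 1/3 ∧ v9 2 1 = 1/3 ∧ v9 2 2 = 1/3 :=
  ⟨rfl, rfl, rfl, rfl, rfl, rfl, rfl, rfl, rfl⟩

/-- `lot9` is the unique iEF lottery of this instance, and it is not
ex-post Pareto-efficient: the matching (a,c,b), which is in its support, is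
Pareto-dominated by the matching (a,b,c). -/
theorem unique_iEF_not_ex_post_PE :
    (∀ b, 0 ≤ lot9 b) ∧ (∑ b, lot9 b = 1) ∧ MIEF v9 lot9 ∧
    (∀ x : Equiv.Perm (Fin 3) → ℝ,
      (∀ b, 0 ≤ x b) → (∑ b, x b = 1) → MIEF v9 x → x = lot9) ∧
    0 < lot9 (Equiv.swap 1 2) ∧
    (∀ i : Fin 3, v9 i (Equiv.swap 1 2 i) ≤ v9 i (Equiv.refl (Fin 3) i)) ∧
    (∃ i : Fin 3, v9 i (Equiv.swap 1 2 i) < v9 i (Equiv.refl (Fin 3) i)) := by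
  obtain ⟨w00, w01, w02, w10, w11, w12, w20, w21, w22⟩ := v9_vals
  have l1 : lot9 1 = 1/3 := by rw [lot9]; simp +decide
  have ls01 : lot9 (Equiv.swap 0 1) = 0 := by rw [lot9]; simp +decide
  have ls02 : lot9 (Equiv.swap 0 2) = 0 := by rw [lot9]; simp +decide
  have ls12 : lot9 (Equiv.swap 1 2) = 1/3 := by rw [lot9]; simp +decide
  have lrot : lot9 (finRotate 3) = 1/3 := by rw [lot9]; simp +decide
  have lrot2 : lot9 (finRotate 3 * finRotate 3) = 0 := by rw [lot9]; simp +decide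
  refine ⟨?_, ?_, ?_, ?_, ?_, ?_, ?_⟩
  · intro b; rw [lot9]; split <;> norm_num
  · rw [sum_perm3, l1, ls01, ls02, ls12, lrot, lrot2]; norm_num
  · intro i k hik j hpos
    rw [prMatch, filter_sum3] at hpos
    rw [prMatch, filter_sum3, filter_sum3]
    fin_cases i <;> fin_cases k <;> (try exact absurd rfl hik) <;> fin_cases j <;>
      simp +decide only [ap_id1_0, ap_id1_1, ap_id1_2, ap_s01_0, ap_s01_1, ap_s01_2, ap_s02_0, ap_s02_1, ap_s02_2, ap_s12_0, ap_s12_1, ap_s12_2, ap_rot_0, ap_rot_1, ap_rot_2, ap_rot2_0, ap_rot2_1, ap_rot2_2, Fin.mk_zero, Fin.mk_one, fm2, if_true, if_false] at hpos ⊢ <;>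
      simp only [l1, ls01, ls02, ls12, lrot, lrot2, w00, w01, w02, w10, w11, w12, w20, w21, w22] at hpos ⊢ <;>
      norm_num at *
  · intro x hnn hsum hief
    have pr02 : prMatch x 0 2 = x (Equiv.swap 0 2) + x (finRotate 3 * finRotate 3) := by
      rw [prMatch, filter_sum3]; simp +decide
    have pr10 : prMatch x 1 0 = x (Equiv.swap 0 1) + x (finRotate 3 * finRotate 3) := by
      rw [prMatch, filter_sum3]; simp +decide
    have pr00 : prMatch x 0 0 = x 1 + x (Equiv.swap 1 2) := by
      rw [prMatch, filter_sum3]; simp +decide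
    have pr12 : prMatch x 1 2 = x (Equiv.swap 1 2) + x (finRotate 3) := by
      rw [prMatch, filter_sum3]; simp +decide
    have h02le : prMatch x 0 2 ≤ 0 := by
      by_contra hc
      push_neg at hc
      have c1 := hief 0 1 (by decide) 2 hc
      have c2 := hief 0 2 (by decide) 2 hc
      rw [filter_sum3, pr02] at c1 c2
      rw [pr02] at hc
      simp +decide only [ap_id1_0, ap_id1_1, ap_id1_2, ap_s01_0, ap_s01_1, ap_s01_2, ap_s02_0, ap_s02_1, ap_s02_2, ap_s12_0, ap_s12_1, ap_s12_2, ap_rot_0, ap_rot_1, ap_rot_2, ap_rot2_0, ap_rot2_1, ap_rot2_2, Fin.mk_zero, Fin.mk_one, fm2, if_true, if_false] at c1 c2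
      simp only [w00, w01, w02, w10, w11, w12, w20, w21, w22] at c1 c2
      linarith
    have h10le : prMatch x 1 0 ≤ 0 := by
      by_contra hc
      push_neg at hc
      have c1 := hief 1 0 (by decide) 0 hc
      have c2 := hief 1 2 (by decide) 0 hc
      rw [filter_sum3, pr10] at c1 c2
      rw [pr10] at hc
      simp +decide only [ap_id1_0, ap_id1_1, ap_id1_2, ap_s01_0, ap_s01_1, ap_s01_2, ap_s02_0, ap_s02_1, ap_s02_2, ap_s12_0, ap_s12_1, ap_s12_2, ap_rot_0, ap_rot_1, ap_rot_2, ap_rot2_0, ap_rot2_1, ap_rot2_2, Fin.mk_zero, Fin.mk_one, fm2, if_true, if_false] at c1 c2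
      simp only [w00, w01, w02, w10, w11, w12, w20, w21, w22] at c1 c2
      linarith
    rw [pr02] at h02le
    rw [pr10] at h10le
    have z02 : x (Equiv.swap 0 2) = 0 := by
      have := hnn (Equiv.swap 0 2); have := hnn (finRotate 3 * finRotate 3)
      have := hnn (Equiv.swap 0 1); linarith
    have zr2 : x (finRotate 3 * finRotate 3) = 0 := by
      have := hnn (Equiv.swap 0 2); have := hnn (finRotate 3 * finRotate 3)
      have := hnn (Equiv.swap 0 1); linarith
    have z01 : x (Equiv.swap 0 1) = 0 := by
      have := hnn (Equiv.swap 0 1); linarith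
    have hpq : x 1 = x (Equiv.swap 1 2) := by
      rcases lt_or_ge 0 (prMatch x 0 0) with hc | hc
      · have c1 := hief 0 1 (by decide) 0 hc
        have c2 := hief 0 2 (by decide) 0 hc
        rw [filter_sum3, pr00] at c1 c2
        simp +decide only [ap_id1_0, ap_id1_1, ap_id1_2, ap_s01_0, ap_s01_1, ap_s01_2, ap_s02_0, ap_s02_1, ap_s02_2, ap_s12_0, ap_s12_1, ap_s12_2, ap_rot_0, ap_rot_1, ap_rot_2, ap_rot2_0, ap_rot2_1, ap_rot2_2, Fin.mk_zero, Fin.mk_one, fm2, if_true, if_false] at c1 c2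
        simp only [w00, w01, w02, w10, w11, w12, w20, w21, w22] at c1 c2
        linarith
      · rw [pr00] at hc
        have := hnn 1; have := hnn (Equiv.swap 1 2); linarith
    have hqr : x (Equiv.swap 1 2) = x (finRotate 3) := by
      rcases lt_or_ge 0 (prMatch x 1 2) with hc | hc
      · have c1 := hief 1 0 (by decide) 2 hc
        have c2 := hief 1 2 (by decide) 2 hc
        rw [filter_sum3, pr12] at c1 c2
        simp +decide only [ap_id1_0, ap_id1_1, ap_id1_2, ap_s01_0, ap_s01_1, ap_s01_2, ap_s02_0, ap_s02_1, ap_s02_2, ap_s12_0, ap_s12_1, ap_s12_2, ap_rot_0, ap_rot_1, ap_rot_2, ap_rot2_0, ap_rot2_1, ap_rot2_2, Fin.mk_zero, Fin.mk_one, fm2, if_true, if_false] at c1 c2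
        simp only [w00, w01, w02, w10, w11, w12, w20, w21, w22] at c1 c2
        linarith
      · rw [pr12] at hc
        have := hnn (Equiv.swap 1 2); have := hnn (finRotate 3); linarith
    rw [sum_perm3] at hsum
    funext b
    rcases perm3_cases b with h | h | h | h | h | h <;> subst h <;>
      simp only [l1, ls01, ls02, ls12, lrot, lrot2] <;> linarith
  · rw [ls12]; norm_num
  · intro i
    fin_cases i <;> simp +decide only [ap_id1_0, ap_id1_1, ap_id1_2, ap_s01_0, ap_s01_1, ap_s01_2, ap_s02_0, ap_s02_1, ap_s02_2, ap_s12_0, ap_s12_1, ap_s12_2, ap_rot_0, ap_rot_1, ap_rot_2, ap_rot2_0, ap_rot2_1, ap_rot2_2, Fin.mk_zero, Fin.mk_one, fm2, if_true, if_false, Equiv.refl_apply] <;>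
      simp only [w00, w01, w02, w10, w11, w12, w20, w21, w22] <;> norm_num
  · refine ⟨1, ?_⟩
    simp +decide only [ap_s12_1, Equiv.refl_apply]
    rw [w11, w12]; norm_num
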